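/- There exists a cubic graph of order 12 that does not admit a (1,1,3,3,3)-packing coloring; in particular, any cubic graph of diameter at most 3 containing four vertex-disjoint triangles is not (1,1,3,3,3)-packing colorable. -/

import Mathlib

/-- An `S`-packing coloring: a map `c : V → Fin k` such that any two distinct
vertices with the same color `i` are at distance greater than `s i`. -/
def SPacking {V : Type*} (G : SimpleGraph V) (k : ℕ) (s : Fin k → ℕ) : Prop :=
  ∃ c : V → Fin k, ∀ u v : V, u ≠ v → c u = c v → G.Reachable u v → s (c u) < G.dist u v

/-- The subdivision of `G`: each edge is replaced by a path of length two
through a new (subdivision) vertex. -/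
def Subdiv {V : Type*} (G : SimpleGraph V) : SimpleGraph (V ⊕ G.edgeSet) :=
  SimpleGraph.fromRel (fun a b => ∃ (v : V) (e : G.edgeSet),
    a = Sum.inl v ∧ b = Sum.inr e ∧ v ∈ (e : Sym2 V))

open SimpleGraph

lemma my_reach_of_steps {V : Type*} {G : SimpleGraph V} {u v : V}
    (h : u = v ∨ G.Adj u v ∨ (∃ w, G.Adj u w ∧ G.Adj w v) ∨
      (∃ w x, G.Adj u w ∧ G.Adj w x ∧ G.Adj x v)) :
    G.Reachable u v ∧ G.dist u v ≤ 3 := by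
  rcases h with rfl | h | ⟨w, h1, h2⟩ | ⟨w, x, h1, h2, h3⟩
  · exact ⟨Reachable.refl u, by simp [SimpleGraph.dist_self]⟩
  · refine ⟨⟨Walk.cons h Walk.nil⟩, ?_⟩
    exact le_trans (SimpleGraph.dist_le (Walk.cons h Walk.nil)) (by simp)
  · refine ⟨⟨Walk.cons h1 (Walk.cons h2 Walk.nil)⟩, ?_⟩
    exact le_trans (SimpleGraph.dist_le (Walk.cons h1 (Walk.cons h2 Walk.nil))) (by simp)
  · refine ⟨⟨Walk.cons h1 (Walk.cons h2 (Walk.cons h3 Walk.nil))⟩, ?_⟩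
    exact le_trans
      (SimpleGraph.dist_le (Walk.cons h1 (Walk.cons h2 (Walk.cons h3 Walk.nil)))) (by simp)

lemma my_no_packing {V : Type} [Fintype V] [DecidableEq V] (G : SimpleGraph V)
    (hconn : G.Connected) (hdist : ∀ u v, G.dist u v ≤ 3)
    (hT : ∃ T : Fin 4 → Finset V, (∀ i j, i ≠ j → Disjoint (T i) (T j)) ∧
        ∀ i, ∃ a b c : V, T i = {a, b, c} ∧ G.Adj a b ∧ G.Adj b c ∧ G.Adj a c) :
    ¬ SPacking G 5 ![1, 1, 3, 3, 3] := by
  rintro ⟨c, hc⟩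
  obtain ⟨T, hdisj, htri⟩ := hT
  have hval1 : ∀ j : Fin 5, 1 ≤ ![1,1,3,3,3] j := by decide
  have hval3 : ∀ j : Fin 5, 2 ≤ j.val → ![1,1,3,3,3] j = 3 := by decide
  have hmem : ∀ j : Fin 5, 2 ≤ j.val → j ∈ ({2,3,4} : Finset (Fin 5)) := by decide
  have key : ∀ i : Fin 4, ∃ t, t ∈ T i ∧ 2 ≤ (c t).val := by
    intro i
    obtain ⟨a, b, d, hTi, hab, hbd, had⟩ := htri i
    by_contra hcon
    push_neg at hcon
    have ha : (c a).val ≤ 1 := Nat.lt_succ_iff.mp (hcon a (by simp [hTi]))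
    have hb : (c b).val ≤ 1 := Nat.lt_succ_iff.mp (hcon b (by simp [hTi]))
    have hd : (c d).val ≤ 1 := Nat.lt_succ_iff.mp (hcon d (by simp [hTi]))
    have pair : ∃ u v : V, G.Adj u v ∧ c u = c v := by
      by_cases h1 : c a = c b
      · exact ⟨a, b, hab, h1⟩
      by_cases h2 : c b = c d
      · exact ⟨b, d, hbd, h2⟩
      refine ⟨a, d, had, ?_⟩
      have h1' : (c a).val ≠ (c b).val := fun h => h1 (Fin.ext h)
      have h2' : (c b).val ≠ (c d).val := fun h => h2 (Fin.ext h)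
      exact Fin.ext (by omega)
    obtain ⟨u, v, huv, hcuv⟩ := pair
    have hlt := hc u v huv.ne hcuv huv.reachable
    have hd1 : G.dist u v = 1 := SimpleGraph.dist_eq_one_iff_adj.mpr huv
    have := hval1 (c u)
    omega
  choose t ht h2 using key
  have maps : ∀ i ∈ (Finset.univ : Finset (Fin 4)),
      c (t i) ∈ ({2,3,4} : Finset (Fin 5)) := fun i _ => hmem _ (h2 i)
  have hcard : ({2,3,4} : Finset (Fin 5)).card < (Finset.univ : Finset (Fin 4)).card := by
    decide
  obtain ⟨i, _, j, _, hij, heq⟩ :=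
    Finset.exists_ne_map_eq_of_card_lt_of_maps_to hcard maps
  have htne : t i ≠ t j := by
    intro h
    exact Finset.disjoint_left.mp (hdisj i j hij) (ht i) (h ▸ ht j)
  have hlt := hc _ _ htne heq (hconn.preconnected _ _)
  have hs3 := hval3 _ (h2 i)
  have := hdist (t i) (t j)
  omega

def myPartner : Fin 12 → Fin 12 := ![3, 6, 9, 0, 7, 10, 1, 4, 11, 2, 5, 8]

def myG : SimpleGraph (Fin 12) where
  Adj u v := u ≠ v ∧ ((u : ℕ) / 3 = (v : ℕ) / 3 ∨ myPartner u = v ∨ myPartner v = u)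
  symm := by
    refine ⟨?_⟩
    rintro u v ⟨h1, h2⟩
    refine ⟨h1.symm, ?_⟩
    rcases h2 with h | h | h
    · exact Or.inl h.symm
    · exact Or.inr (Or.inr h)
    · exact Or.inr (Or.inl h)
  loopless := ⟨fun u h => h.1 rfl⟩

instance : DecidableRel myG.Adj := fun u v =>
  inferInstanceAs (Decidable (u ≠ v ∧ ((u : ℕ) / 3 = (v : ℕ) / 3 ∨ myPartner u = v ∨ myPartner v = u)))

lemma myG_steps : ∀ u v : Fin 12, u = v ∨ myG.Adj u v ∨ (∃ w, myG.Adj u w ∧ myG.Adj w v) ∨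
    (∃ w x, myG.Adj u w ∧ myG.Adj w x ∧ myG.Adj x v) := by decide

theorem stmt_15 :
    (∀ (V : Type) [Fintype V] [DecidableEq V] (G : SimpleGraph V) [DecidableRel G.Adj],
      (∀ v, G.degree v = 3) → G.Connected → (∀ u v, G.dist u v ≤ 3) →
      (∃ T : Fin 4 → Finset V, (∀ i j, i ≠ j → Disjoint (T i) (T j)) ∧
        ∀ i, ∃ a b c : V, T i = {a, b, c} ∧ G.Adj a b ∧ G.Adj b c ∧ G.Adj a c) →
      ¬ SPacking G 5 ![1, 1, 3, 3, 3]) ∧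
    (∃ (V : Type) (_ : Fintype V) (G : SimpleGraph V) (_ : DecidableRel G.Adj),
      Fintype.card V = 12 ∧ (∀ v, G.degree v = 3) ∧
      ¬ SPacking G 5 ![1, 1, 3, 3, 3]) := by
  constructor
  · intro V _ _ G _ _ hconn hdist hT
    exact my_no_packing G hconn hdist hT
  · refine ⟨Fin 12, inferInstance, myG, inferInstance, by simp, by decide, ?_⟩
    have hsteps := fun u v => my_reach_of_steps (G := myG) (myG_steps u v)
    have hconn : myG.Connected := by
      rw [connected_iff]
      exact ⟨fun u v => (hsteps u v).1, ⟨0⟩⟩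
    refine my_no_packing myG hconn (fun u v => (hsteps u v).2) ?_
    refine ⟨![{0,1,2}, {3,4,5}, {6,7,8}, {9,10,11}], by decide, ?_⟩
    intro i
    fin_cases i
    · exact ⟨0, 1, 2, rfl, by decide, by decide, by decide⟩
    · exact ⟨3, 4, 5, rfl, by decide, by decide, by decide⟩
    · exact ⟨6, 7, 8, rfl, by decide, by decide, by decide⟩
    · exact ⟨9, 10, 11, rfl, by decide, by decide, by decide⟩
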